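/- Let B0 ∈ Ad and let κ0 be a quasi-eigenvalue of B0 with κ0 ∈ i·ℝ₊ (i.e., Re κ0 = 0 and Im κ0 > 0). If B0 is not a.e. equal to the constant b1 and not a.e. equal to the constant b2, then there exist β1 > 0 and B1 ∈ Ad such that κ0 − i β1 is a quasi-eigenvalue of B1 (i.e., κ0 − i β1 ∈ K(Ad)). -/

import Mathlib

open MeasureTheory Set Complex intervalIntegral

noncomputable section

/-- The Lebesgue measure restricted to the interval `(0,1)`. -/
def mu01 : Measure ℝ := volume.restrict (Set.Ioo 0 1)

/-- `y` (with derivative `y'`) is a `W^{2,∞}` solution of `y'' + z² B y = 0` on `(0,1)`: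
`y ∈ C¹[0,1]`, `y'` is Lipschitz (so `y'' ∈ L^∞` exists a.e.), and the equation holds a.e. -/
def IsW2Sol (B : ℝ → ℂ) (z : ℂ) (y y' : ℝ → ℂ) : Prop :=
  (∀ x ∈ Set.Icc (0:ℝ) 1, HasDerivWithinAt y (y' x) (Set.Icc (0:ℝ) 1) x) ∧
  (∃ L : NNReal, LipschitzOnWith L y' (Set.Icc (0:ℝ) 1)) ∧
  (∀ᵐ x ∂mu01, HasDerivAt y' (-(z^2) * B x * y x) x)

/-- `κ` is a quasi-eigenvalue of the structure `B`: `κ ≠ 0` and there is a nonzero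
`W^{2,∞}` solution of `y'' + κ² B y = 0` with `y'(0) = 0` and `κ y(1) = i y'(1)`. -/
def QuasiEigen (B : ℝ → ℂ) (κ : ℂ) : Prop :=
  κ ≠ 0 ∧ ∃ y y' : ℝ → ℂ, IsW2Sol B κ y y' ∧
    (∃ x ∈ Set.Icc (0:ℝ) 1, y x ≠ 0) ∧ y' 0 = 0 ∧ κ * y 1 = Complex.I * y' 1

/-- `y` is the solution `φ(·, z; B)` (normalized by `y(0)=1`, `y'(0)=0`). -/
def IsPhi (B : ℝ → ℂ) (z : ℂ) (y y' : ℝ → ℂ) : Prop :=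
  IsW2Sol B z y y' ∧ y 0 = 1 ∧ y' 0 = 0

/-- `y` is the solution `ψ(·, z; B)` (normalized by `y(0)=0`, `y'(0)=1`). -/
def IsPsi (B : ℝ → ℂ) (z : ℂ) (y y' : ℝ → ℂ) : Prop :=
  IsW2Sol B z y y' ∧ y 0 = 0 ∧ y' 0 = 1

/-- Membership of a real-valued structure in the admissible family `Ad`:
`B ∈ L^∞((0,1);ℝ)` with `b1 ≤ B(x) ≤ b2` a.e. on `(0,1)`. -/
def InAd (b1 b2 : ℝ) (B : ℝ → ℝ) : Prop :=
  AEStronglyMeasurable B mu01 ∧ ∀ᵐ x ∂mu01, b1 ≤ B x ∧ B x ≤ b2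

/-- The set `K(Ad)` of all quasi-eigenvalues of admissible structures. -/
def KAd (b1 b2 : ℝ) : Set ℂ :=
  {κ | ∃ B : ℝ → ℝ, InAd b1 b2 B ∧ QuasiEigen (fun x => ((B x : ℝ) : ℂ)) κ}


open scoped NNReal ENNReal

/-- a.e. transfer from `(0,1)` to a subinterval `Ioc s t`. -/
lemma ae_Ioc_of_ae_Ioo01 {P : ℝ → Prop} {s t : ℝ} (hs : 0 ≤ s) (ht : t ≤ 1)
    (h : ∀ᵐ x ∂(volume.restrict (Set.Ioo (0:ℝ) 1)), P x) :
    ∀ᵐ x ∂(volume.restrict (Set.Ioc s t)), P x := by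
  rw [ae_restrict_iff' measurableSet_Ioo] at h
  rw [ae_restrict_iff' measurableSet_Ioc]
  have h1 : ∀ᵐ x : ℝ ∂volume, x ≠ 1 := by
    have : (volume : Measure ℝ) {1} = 0 := Real.volume_singleton
    exact measure_mono_null (fun x hx => by simpa using hx) this
  filter_upwards [h, h1] with x hx hx1 hmem
  exact hx ⟨lt_of_le_of_lt hs hmem.1, lt_of_le_of_ne (hmem.2.trans ht) hx1⟩

/-- FTC for a Lipschitz function with an a.e. derivative on (0,1). -/
lemma ftc_lip {f g : ℝ → ℝ} {L : NNReal}
    (hf : LipschitzOnWith L f (Set.Icc 0 1))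
    (hae : ∀ᵐ x ∂(volume.restrict (Set.Ioo (0:ℝ) 1)), HasDerivAt f (g x) x) :
    IntegrableOn g (Set.Ioo 0 1) volume ∧
      ∀ s t : ℝ, 0 ≤ s → s ≤ t → t ≤ 1 →
        f t - f s = ∫ x in Set.Ioc s t, g x := by
  obtain ⟨F, hF, hEq⟩ := hf.extend_real
  set h : ℝ → ℝ := fun x => F x + L * x with hh_def
  have hmono : Monotone h := by
    intro a b hab
    have hd := hF.dist_le_mul a b
    rw [Real.dist_eq, Real.dist_eq] at hd
    have := abs_le.mp hd
    have habs : |a - b| = b - a := by rw [abs_sub_comm]; exact abs_of_nonneg (by linarith)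
    rw [habs] at this
    simp only [hh_def]
    nlinarith [this.1, this.2]
  have hcont : Continuous h := (hF.continuous).add (continuous_const.mul continuous_id)
  set S1 : StieltjesFunction ℝ := ⟨h, hmono, fun x => hcont.continuousAt.continuousWithinAt⟩
    with hS1_def
  set h2 : ℝ → ℝ := fun x => L * x - F x with hh2_def
  have hmono2 : Monotone h2 := by
    intro a b hab
    have hd := hF.dist_le_mul a b
    rw [Real.dist_eq, Real.dist_eq] at hd
    have := abs_le.mp hd
    have habs : |a - b| = b - a := by rw [abs_sub_comm]; exact abs_of_nonneg (by linarith)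
    rw [habs] at this
    simp only [hh2_def]
    nlinarith [this.1, this.2]
  have hcont2 : Continuous h2 := (continuous_const.mul continuous_id).sub hF.continuous
  set S2 : StieltjesFunction ℝ := ⟨h2, hmono2, fun x => hcont2.continuousAt.continuousWithinAt⟩
    with hS2_def
  have key : S1.measure + S2.measure = (((2 * L : ℝ≥0) : ℝ≥0∞)) • volume := by
    have : IsLocallyFiniteMeasure (S1.measure + S2.measure) := by
      constructor
      intro x
      obtain ⟨u1, hu1, hf1⟩ := S1.measure.finiteAt_nhds x
      obtain ⟨u2, hu2, hf2⟩ := S2.measure.finiteAt_nhds x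
      refine ⟨u1 ∩ u2, Filter.inter_mem hu1 hu2, ?_⟩
      rw [Measure.add_apply]
      exact ENNReal.add_lt_top.mpr ⟨(measure_mono Set.inter_subset_left).trans_lt hf1,
        (measure_mono Set.inter_subset_right).trans_lt hf2⟩
    refine MeasureTheory.Measure.ext_of_Ioc _ _ (fun a b hab => ?_)
    rw [Measure.add_apply, StieltjesFunction.measure_Ioc, StieltjesFunction.measure_Ioc,
      Measure.smul_apply, Real.volume_Ioc, smul_eq_mul]
    have c1 : (S1 b : ℝ) - S1 a = h b - h a := rfl
    have c2 : (S2 b : ℝ) - S2 a = h2 b - h2 a := rfl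
    rw [c1, c2, ← ENNReal.ofReal_add (by simpa using hmono hab.le) (by simpa using hmono2 hab.le)]
    rw [← ENNReal.ofReal_coe_nnreal, ← ENNReal.ofReal_mul (by positivity)]
    congr 1
    push_cast
    simp only [hh_def, hh2_def]
    ring
  have hle : S1.measure ≤ (((2 * L : ℝ≥0) : ℝ≥0∞)) • volume := by
    rw [← key]; exact Measure.le_add_right le_rfl
  have hac : S1.measure ≪ volume := Measure.absolutelyContinuous_of_le_smul hle
  set d : ℝ → ℝ≥0∞ := S1.measure.rnDeriv volume with hd_def
  have hd_ae : ∀ᵐ x ∂(volume.restrict (Set.Ioo (0:ℝ) 1)), HasDerivAt h ((d x).toReal) x :=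
    ae_restrict_of_ae S1.ae_hasDerivAt
  have hae2 : ∀ᵐ x ∂(volume.restrict (Set.Ioo (0:ℝ) 1)), (d x).toReal = g x + L := by
    filter_upwards [hd_ae, hae, ae_restrict_mem measurableSet_Ioo] with x hx1 hx2 hx3
    have hmem : Set.Ioo (0:ℝ) 1 ∈ nhds x := isOpen_Ioo.mem_nhds hx3
    have hFf : F =ᶠ[nhds x] f :=
      Filter.eventuallyEq_of_mem hmem (fun y hy => (hEq (Set.Ioo_subset_Icc_self hy)).symm)
    have hdF : HasDerivAt F (g x) x := hx2.congr_of_eventuallyEq hFf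
    have hdh : HasDerivAt h (g x + L) x := by
      simpa using hdF.fun_add (((hasDerivAt_id x).const_mul (L:ℝ)))
    exact hx1.unique hdh
  have hdmeas : Measurable d := Measure.measurable_rnDeriv _ _
  have hd_lt : ∀ᵐ x ∂(volume : Measure ℝ), d x < ⊤ := Measure.rnDeriv_lt_top _ _
  have hdInt : IntegrableOn (fun x => (d x).toReal) (Set.Ioo 0 1) volume := by
    apply integrable_toReal_of_lintegral_ne_top (hdmeas.aemeasurable.restrict)
    rw [Measure.setLIntegral_rnDeriv hac]
    exact ((measure_mono (Set.Ioo_subset_Ioc_self)).trans_lt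
      (by rw [StieltjesFunction.measure_Ioc]; exact ENNReal.ofReal_lt_top)).ne
  have hgInt : IntegrableOn g (Set.Ioo 0 1) volume := by
    have : IntegrableOn (fun x => (d x).toReal - L) (Set.Ioo 0 1) volume :=
      hdInt.sub (integrableOn_const measure_Ioo_lt_top.ne)
    exact this.congr_fun_ae (by filter_upwards [hae2] with x hx; rw [hx]; ring)
  refine ⟨hgInt, fun s t hs hst ht => ?_⟩
  have hres : volume.restrict (Set.Ioc s t) = volume.restrict (Set.Ioo s t) :=
    (Measure.restrict_congr_set MeasureTheory.Ioo_ae_eq_Ioc).symm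
  have hμst : S1.measure (Set.Ioc s t) = ∫⁻ x in Set.Ioc s t, d x ∂volume :=
    (Measure.setLIntegral_rnDeriv hac _).symm
  have step1 : f t - f s = h t - h s - L * (t - s) := by
    rw [hEq ⟨hs.trans hst, ht⟩, hEq ⟨hs, hst.trans ht⟩]; simp only [hh_def]; ring
  have step2 : h t - h s = (S1.measure (Set.Ioc s t)).toReal := by
    rw [StieltjesFunction.measure_Ioc]
    have : (S1 t : ℝ) - S1 s = h t - h s := rfl
    rw [this, ENNReal.toReal_ofReal (by simpa using hmono hst)]
  have step3 : (S1.measure (Set.Ioc s t)).toReal = ∫ x in Set.Ioc s t, (d x).toReal ∂volume := by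
    rw [hμst]
    exact (integral_toReal (hdmeas.aemeasurable.restrict) (ae_restrict_of_ae hd_lt)).symm
  have step4 : ∫ x in Set.Ioc s t, (d x).toReal ∂volume
      = ∫ x in Set.Ioc s t, (g x + L) ∂volume := by
    apply MeasureTheory.integral_congr_ae
    exact ae_Ioc_of_ae_Ioo01 hs ht hae2
  have hgInt' : IntegrableOn g (Set.Ioc s t) volume := by
    rw [IntegrableOn, hres]
    exact hgInt.mono_set (fun x hx => ⟨lt_of_le_of_lt hs hx.1, lt_of_lt_of_le hx.2 ht⟩)
  have step5 : ∫ x in Set.Ioc s t, (g x + L) ∂volume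
      = (∫ x in Set.Ioc s t, g x ∂volume) + L * (t - s) := by
    rw [integral_add hgInt' (integrableOn_const measure_Ioc_lt_top.ne)]
    congr 1
    rw [setIntegral_const, Real.volume_real_Ioc_of_le hst, smul_eq_mul,
      mul_comm]
  rw [step1, step2, step3, step4, step5]; ring


lemma ae_ne_pt (c : ℝ) (μ : Measure ℝ) [NullSingletonClass μ] : ∀ᵐ x : ℝ ∂μ, x ≠ c := by
  have : μ {c} = 0 := measure_singleton c
  exact measure_mono_null (fun x hx => by simpa using hx) this

lemma lipOn_of_bound {f : ℝ → ℝ} {C : ℝ}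
    (h : ∀ x ∈ Set.Icc (0:ℝ) 1, ∀ y ∈ Set.Icc (0:ℝ) 1, |f x - f y| ≤ C * |x - y|) :
    ∃ K : ℝ≥0, LipschitzOnWith K f (Set.Icc (0:ℝ) 1) := by
  refine ⟨C.toNNReal, ?_⟩
  rw [lipschitzOnWith_iff_dist_le_mul]
  intro x hx y hy
  rw [Real.dist_eq, Real.dist_eq]
  exact (h x hx y hy).trans
    (mul_le_mul_of_nonneg_right (Real.le_coe_toNNReal C) (abs_nonneg _))

lemma lipOn_bounded {f : ℝ → ℝ} (h : ∃ K : ℝ≥0, LipschitzOnWith K f (Set.Icc (0:ℝ) 1)) :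
    ∃ M : ℝ, 0 ≤ M ∧ ∀ x ∈ Set.Icc (0:ℝ) 1, |f x| ≤ M := by
  obtain ⟨K, hK⟩ := h
  refine ⟨|f 0| + K, by positivity, fun x hx => ?_⟩
  have h0 : (0:ℝ) ∈ Set.Icc (0:ℝ) 1 := ⟨le_refl _, zero_le_one⟩
  have := (lipschitzOnWith_iff_dist_le_mul.mp hK) x hx 0 h0
  rw [Real.dist_eq, Real.dist_eq, sub_zero] at this
  have habs : |x| ≤ 1 := abs_le.mpr ⟨by linarith [hx.1], hx.2⟩
  calc |f x| ≤ |f 0| + |f x - f 0| := by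
        have := abs_sub_abs_le_abs_sub (f x) (f 0); linarith
    _ ≤ |f 0| + K := by nlinarith [this, habs, K.coe_nonneg]

lemma lipOn_mul {f g : ℝ → ℝ} (hf : ∃ K : ℝ≥0, LipschitzOnWith K f (Set.Icc (0:ℝ) 1))
    (hg : ∃ K : ℝ≥0, LipschitzOnWith K g (Set.Icc (0:ℝ) 1)) :
    ∃ K : ℝ≥0, LipschitzOnWith K (fun x => f x * g x) (Set.Icc (0:ℝ) 1) := by
  obtain ⟨Mf, hMf0, hMf⟩ := lipOn_bounded hf
  obtain ⟨Mg, hMg0, hMg⟩ := lipOn_bounded hg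
  obtain ⟨Kf, hKf⟩ := hf
  obtain ⟨Kg, hKg⟩ := hg
  apply lipOn_of_bound (C := Mf * Kg + Mg * Kf)
  intro x hx y hy
  have h1 := (lipschitzOnWith_iff_dist_le_mul.mp hKf) x hx y hy
  have h2 := (lipschitzOnWith_iff_dist_le_mul.mp hKg) x hx y hy
  rw [Real.dist_eq, Real.dist_eq] at h1 h2
  have key : f x * g x - f y * g y = f x * (g x - g y) + g y * (f x - f y) := by ring
  rw [key]
  calc |f x * (g x - g y) + g y * (f x - f y)|
      ≤ |f x * (g x - g y)| + |g y * (f x - f y)| := abs_add_le _ _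
    _ = |f x| * |g x - g y| + |g y| * |f x - f y| := by rw [abs_mul, abs_mul]
    _ ≤ Mf * (Kg * |x - y|) + Mg * (Kf * |x - y|) := by
        gcongr <;> [exact hMf x hx; exact hMg y hy]
    _ = (Mf * Kg + Mg * Kf) * |x - y| := by ring

lemma lipOn_sub {f g : ℝ → ℝ} (hf : ∃ K : ℝ≥0, LipschitzOnWith K f (Set.Icc (0:ℝ) 1))
    (hg : ∃ K : ℝ≥0, LipschitzOnWith K g (Set.Icc (0:ℝ) 1)) :
    ∃ K : ℝ≥0, LipschitzOnWith K (fun x => f x - g x) (Set.Icc (0:ℝ) 1) := by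
  obtain ⟨Kf, hKf⟩ := hf
  obtain ⟨Kg, hKg⟩ := hg
  apply lipOn_of_bound (C := (Kf : ℝ) + Kg)
  intro x hx y hy
  have h1 := (lipschitzOnWith_iff_dist_le_mul.mp hKf) x hx y hy
  have h2 := (lipschitzOnWith_iff_dist_le_mul.mp hKg) x hx y hy
  rw [Real.dist_eq, Real.dist_eq] at h1 h2
  have : f x - g x - (f y - g y) = (f x - f y) - (g x - g y) := by ring
  rw [this]
  calc |f x - f y - (g x - g y)| ≤ |f x - f y| + |g x - g y| := abs_sub _ _
    _ ≤ Kf * |x - y| + Kg * |x - y| := add_le_add h1 h2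
    _ = ((Kf : ℝ) + Kg) * |x - y| := by ring

lemma lipOn_of_deriv {f f' : ℝ → ℝ} {C : ℝ}
    (hd : ∀ x ∈ Set.Icc (0:ℝ) 1, HasDerivWithinAt f (f' x) (Set.Icc (0:ℝ) 1) x)
    (hC : ∀ x ∈ Set.Icc (0:ℝ) 1, |f' x| ≤ C) :
    ∃ K : ℝ≥0, LipschitzOnWith K f (Set.Icc (0:ℝ) 1) := by
  apply lipOn_of_bound (C := C)
  intro x hx y hy
  have := (convex_Icc (0:ℝ) 1).norm_image_sub_le_of_norm_hasDerivWithin_le hd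
    (fun z hz => by simpa using hC z hz) hy hx
  simpa [Real.norm_eq_abs] using this

lemma hasDerivAt_of_Ioo {E : Type*} [NormedAddCommGroup E] [NormedSpace ℝ E]
    {f f' : ℝ → E}
    (hd : ∀ x ∈ Set.Icc (0:ℝ) 1, HasDerivWithinAt f (f' x) (Set.Icc (0:ℝ) 1) x)
    {x : ℝ} (hx : x ∈ Set.Ioo (0:ℝ) 1) : HasDerivAt f (f' x) x :=
  (hd x (Set.Ioo_subset_Icc_self hx)).hasDerivAt (Icc_mem_nhds hx.1 hx.2)


/-- Uniqueness: a solution with zero initial data vanishes on `[0,1]`. -/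
lemma sol_zero (t0 b2 : ℝ) (hb2 : 0 ≤ b2) (B0 : ℝ → ℝ)
    (hBae : ∀ᵐ x ∂(volume.restrict (Set.Ioo (0:ℝ) 1)), |B0 x| ≤ b2)
    (y y' : ℝ → ℂ)
    (hyd : ∀ x ∈ Set.Icc (0:ℝ) 1, HasDerivWithinAt y (y' x) (Set.Icc (0:ℝ) 1) x)
    (hLip : ∃ L : ℝ≥0, LipschitzOnWith L y' (Set.Icc (0:ℝ) 1))
    (hode : ∀ᵐ x ∂(volume.restrict (Set.Ioo (0:ℝ) 1)),
        HasDerivAt y' (((t0^2 * B0 x : ℝ) : ℂ) * y x) x)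
    (hy0 : y 0 = 0) (hy'0 : y' 0 = 0) :
    ∀ x ∈ Set.Icc (0:ℝ) 1, y x = 0 := by
  obtain ⟨L, hL⟩ := hLip
  have hycont : ContinuousOn y (Set.Icc 0 1) := fun x hx => (hyd x hx).continuousWithinAt
  have hy'cont : ContinuousOn y' (Set.Icc 0 1) := hL.continuousOn
  set C : ℝ := t0^2 * b2 with hC_def
  have hC : 0 ≤ C := mul_nonneg (sq_nonneg t0) hb2
  -- real part
  have hlipre : LipschitzOnWith (‖Complex.reCLM‖₊ * L) (fun x => (y' x).re)
      (Set.Icc (0:ℝ) 1) := Complex.reCLM.lipschitz.comp_lipschitzOnWith hL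
  have haere : ∀ᵐ x ∂(volume.restrict (Set.Ioo (0:ℝ) 1)),
      HasDerivAt (fun t => (y' t).re) (t0^2 * B0 x * (y x).re) x := by
    filter_upwards [hode] with x hx
    have h2 := Complex.reCLM.hasFDerivAt.comp_hasDerivAt x hx
    have h3 : Complex.reCLM (((t0^2 * B0 x : ℝ):ℂ) * y x) = t0^2 * B0 x * (y x).re :=
      Complex.re_ofReal_mul _ _
    rw [h3] at h2
    exact h2
  obtain ⟨hgrInt, hgrFTC⟩ := ftc_lip hlipre haere
  -- imaginary part
  have hlipim : LipschitzOnWith (‖Complex.imCLM‖₊ * L) (fun x => (y' x).im)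
      (Set.Icc (0:ℝ) 1) := Complex.imCLM.lipschitz.comp_lipschitzOnWith hL
  have haeim : ∀ᵐ x ∂(volume.restrict (Set.Ioo (0:ℝ) 1)),
      HasDerivAt (fun t => (y' t).im) (t0^2 * B0 x * (y x).im) x := by
    filter_upwards [hode] with x hx
    have h2 := Complex.imCLM.hasFDerivAt.comp_hasDerivAt x hx
    have h3 : Complex.imCLM (((t0^2 * B0 x : ℝ):ℂ) * y x) = t0^2 * B0 x * (y x).im :=
      Complex.im_ofReal_mul _ _
    rw [h3] at h2
    exact h2
  obtain ⟨hgiInt, hgiFTC⟩ := ftc_lip hlipim haeim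
  -- componentwise bounds
  have habs_comp : ∀ gInt : IntegrableOn (fun x => t0^2*B0 x*(y x).re) (Set.Ioo 0 1) volume,
      True := fun _ => trivial
  have hCyInt : ∀ t ∈ Set.Icc (0:ℝ) 1,
      IntegrableOn (fun x => C * ‖y x‖) (Set.Ioc 0 t) volume := by
    intro t ht
    have : ContinuousOn (fun x => C * ‖y x‖) (Set.Icc (0:ℝ) 1) :=
      continuousOn_const.mul hycont.norm
    exact (this.integrableOn_Icc).mono_set
      (fun x hx => ⟨hx.1.le, hx.2.trans ht.2⟩)
  have hbound : ∀ (w : ℝ → ℝ), IntegrableOn w (Set.Ioo 0 1) volume →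
      (∀ᵐ x ∂(volume.restrict (Set.Ioo (0:ℝ) 1)), |w x| ≤ C * ‖y x‖) →
      ∀ t ∈ Set.Icc (0:ℝ) 1, |∫ x in Set.Ioc 0 t, w x| ≤ ∫ x in Set.Ioc 0 t, C * ‖y x‖ := by
    intro w hwInt hwae t ht
    have hwInt' : IntegrableOn w (Set.Ioc 0 t) volume := by
      rw [IntegrableOn, (Measure.restrict_congr_set MeasureTheory.Ioo_ae_eq_Ioc).symm]
      exact hwInt.mono_set (fun x hx => ⟨hx.1, lt_of_lt_of_le hx.2 ht.2⟩)
    calc |∫ x in Set.Ioc 0 t, w x| ≤ ∫ x in Set.Ioc 0 t, |w x| := by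
          simpa [Real.norm_eq_abs] using
            MeasureTheory.norm_integral_le_integral_norm
              (μ := volume.restrict (Set.Ioc 0 t)) w
      _ ≤ ∫ x in Set.Ioc 0 t, C * ‖y x‖ := by
          apply MeasureTheory.integral_mono_ae hwInt'.abs (hCyInt t ht)
          exact ae_Ioc_of_ae_Ioo01 le_rfl ht.2 hwae
  have haegr : ∀ᵐ x ∂(volume.restrict (Set.Ioo (0:ℝ) 1)),
      |t0^2*B0 x*(y x).re| ≤ C * ‖y x‖ := by
    filter_upwards [hBae] with x hB
    have h1 : |t0^2*B0 x*(y x).re| = t0^2 * |B0 x| * |(y x).re| := by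
      rw [abs_mul, abs_mul, _root_.abs_of_nonneg (sq_nonneg t0)]
    have h2 : |(y x).re| ≤ ‖y x‖ := by
      exact Complex.abs_re_le_norm _
    rw [h1, hC_def]
    have h3 : t0^2 * |B0 x| ≤ t0^2 * b2 := mul_le_mul_of_nonneg_left hB (sq_nonneg t0)
    exact mul_le_mul h3 h2 (abs_nonneg _) (mul_nonneg (sq_nonneg t0) hb2)
  have haegi : ∀ᵐ x ∂(volume.restrict (Set.Ioo (0:ℝ) 1)),
      |t0^2*B0 x*(y x).im| ≤ C * ‖y x‖ := by
    filter_upwards [hBae] with x hB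
    have h1 : |t0^2*B0 x*(y x).im| = t0^2 * |B0 x| * |(y x).im| := by
      rw [abs_mul, abs_mul, _root_.abs_of_nonneg (sq_nonneg t0)]
    have h2 : |(y x).im| ≤ ‖y x‖ := by
      exact Complex.abs_im_le_norm _
    rw [h1, hC_def]
    have h3 : t0^2 * |B0 x| ≤ t0^2 * b2 := mul_le_mul_of_nonneg_left hB (sq_nonneg t0)
    exact mul_le_mul h3 h2 (abs_nonneg _) (mul_nonneg (sq_nonneg t0) hb2)
  have hy'bound : ∀ t ∈ Set.Icc (0:ℝ) 1,
      ‖y' t‖ ≤ 2 * ∫ x in Set.Ioc 0 t, C * ‖y x‖ := by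
    intro t ht
    have hfr : (y' t).re = ∫ x in Set.Ioc 0 t, t0^2*B0 x*(y x).re := by
      have h := hgrFTC 0 t le_rfl ht.1 ht.2
      rw [hy'0] at h
      simpa using h
    have hfi : (y' t).im = ∫ x in Set.Ioc 0 t, t0^2*B0 x*(y x).im := by
      have h := hgiFTC 0 t le_rfl ht.1 ht.2
      rw [hy'0] at h
      simpa using h
    have h1 : |(y' t).re| ≤ ∫ x in Set.Ioc 0 t, C * ‖y x‖ := by
      rw [hfr]; exact hbound _ hgrInt haegr t ht
    have h2 : |(y' t).im| ≤ ∫ x in Set.Ioc 0 t, C * ‖y x‖ := by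
      rw [hfi]; exact hbound _ hgiInt haegi t ht
    have h3 : ‖y' t‖ ≤ |(y' t).re| + |(y' t).im| := by
      exact Complex.norm_le_abs_re_add_abs_im _
    linarith
  have hybound : ∀ t ∈ Set.Icc (0:ℝ) 1, ‖y t‖ ≤ ∫ x in Set.Ioc 0 t, ‖y' x‖ := by
    intro t ht
    have hint : IntervalIntegrable y' volume 0 t := by
      apply ContinuousOn.intervalIntegrable
      rw [Set.uIcc_of_le ht.1]
      exact hy'cont.mono (Set.Icc_subset_Icc le_rfl ht.2)
    have heq : ∫ x in (0:ℝ)..t, y' x = y t - y 0 :=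
      intervalIntegral.integral_eq_sub_of_hasDeriv_right_of_le ht.1
        (hycont.mono (Set.Icc_subset_Icc le_rfl ht.2))
        (fun x hx =>
          (hasDerivAt_of_Ioo hyd ⟨hx.1, lt_of_lt_of_le hx.2 ht.2⟩).hasDerivWithinAt)
        hint
    rw [hy0, sub_zero] at heq
    calc ‖y t‖ = ‖∫ x in (0:ℝ)..t, y' x‖ := by rw [heq]
      _ ≤ ∫ x in (0:ℝ)..t, ‖y' x‖ := intervalIntegral.norm_integral_le_integral_norm ht.1
      _ = ∫ x in Set.Ioc 0 t, ‖y' x‖ := by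
          rw [intervalIntegral.integral_of_le ht.1]
  -- clamp and Gronwall
  set pr : ℝ → ℝ := fun x => max 0 (min 1 x) with hpr_def
  have hprc : Continuous pr := continuous_const.max (continuous_const.min continuous_id)
  have hprmem : ∀ x : ℝ, pr x ∈ Set.Icc (0:ℝ) 1 :=
    fun x => ⟨le_max_left _ _, max_le zero_le_one (min_le_left _ _)⟩
  have hpreq : ∀ x ∈ Set.Icc (0:ℝ) 1, pr x = x := by
    intro x hx
    rw [hpr_def]
    simp only
    rw [min_eq_right hx.2, max_eq_right hx.1]
  set z : ℝ → ℝ := fun x => ‖y (pr x)‖ + ‖y' (pr x)‖ with hz_def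
  have hzc : Continuous z := by
    apply Continuous.add
    · exact (hycont.norm.comp_continuous hprc hprmem)
    · exact (hy'cont.norm.comp_continuous hprc hprmem)
  have hznn : ∀ x : ℝ, 0 ≤ z x := fun x => add_nonneg (norm_nonneg _) (norm_nonneg _)
  have hzIcc : ∀ x ∈ Set.Icc (0:ℝ) 1, z x = ‖y x‖ + ‖y' x‖ := by
    intro x hx; rw [hz_def]; simp only; rw [hpreq x hx]
  set K : ℝ := 1 + 2 * C with hK_def
  have hK0 : 0 < K := by positivity
  have hstep : ∀ t ∈ Set.Icc (0:ℝ) 1, z t ≤ K * ∫ x in Set.Ioc 0 t, z x := by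
    intro t ht
    have hzint : IntegrableOn z (Set.Ioc 0 t) volume :=
      (hzc.integrableOn_Ioc)
    have hy'int : IntegrableOn (fun x => ‖y' x‖) (Set.Ioc 0 t) volume := by
      apply ContinuousOn.integrableOn_Icc (hy'cont.norm.mono
        (Set.Icc_subset_Icc le_rfl ht.2)) |>.mono_set Set.Ioc_subset_Icc_self
    have h1 : ∫ x in Set.Ioc 0 t, ‖y' x‖ ≤ ∫ x in Set.Ioc 0 t, z x := by
      apply MeasureTheory.integral_mono_ae hy'int hzint
      filter_upwards [ae_restrict_mem measurableSet_Ioc] with x hx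
      rw [hzIcc x ⟨hx.1.le, hx.2.trans ht.2⟩]
      linarith [norm_nonneg (y x)]
    have h2 : ∫ x in Set.Ioc 0 t, C * ‖y x‖ ≤ C * ∫ x in Set.Ioc 0 t, z x := by
      rw [MeasureTheory.integral_const_mul]
      apply mul_le_mul_of_nonneg_left _ hC
      apply MeasureTheory.integral_mono_ae
      · have : ContinuousOn (fun x => ‖y x‖) (Set.Icc (0:ℝ) 1) := hycont.norm
        exact (this.mono (Set.Icc_subset_Icc le_rfl ht.2)).integrableOn_Icc.mono_set
          Set.Ioc_subset_Icc_self
      · exact hzint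
      · filter_upwards [ae_restrict_mem measurableSet_Ioc] with x hx
        rw [hzIcc x ⟨hx.1.le, hx.2.trans ht.2⟩]
        linarith [norm_nonneg (y' x)]
    have h3 := hy'bound t ht
    have h4 := hybound t ht
    have h5 : 0 ≤ ∫ x in Set.Ioc 0 t, z x := MeasureTheory.integral_nonneg hznn
    rw [hzIcc t ht, hK_def]
    nlinarith [h1, h2, h3, h4, h5]
  set H : ℝ → ℝ := fun t => ∫ x in (0:ℝ)..t, z x with hH_def
  have hHd : ∀ t : ℝ, HasDerivAt H (z t) t := fun t =>
    (hzc.integral_hasStrictDerivAt 0 t).hasDerivAt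
  have hH0 : H 0 = 0 := intervalIntegral.integral_same
  have hHIoc : ∀ t : ℝ, 0 ≤ t → H t = ∫ x in Set.Ioc 0 t, z x := fun t ht =>
    intervalIntegral.integral_of_le ht
  set P : ℝ → ℝ := fun t => H t * Real.exp (-(K*t)) with hP_def
  have hPd : ∀ t : ℝ, HasDerivAt P ((z t - K * H t) * Real.exp (-(K*t))) t := by
    intro t
    have h1 : HasDerivAt (fun s : ℝ => -(K*s)) (-K) t := by
      simpa using ((hasDerivAt_id t).const_mul K).fun_neg
    have he : HasDerivAt (fun s : ℝ => Real.exp (-(K*s))) (Real.exp (-(K*t)) * -K) t :=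
      by have := (Real.hasDerivAt_exp (-(K*t))).comp t h1; exact this
    have := (hHd t).fun_mul he
    exact this.congr_deriv (by ring)
  have hHcont : Continuous H :=
    continuous_iff_continuousAt.mpr (fun t => (hHd t).continuousAt)
  have hPcont : Continuous P :=
    hHcont.mul (Real.continuous_exp.comp (continuous_const.mul continuous_id).neg)
  have hPmono : AntitoneOn P (Set.Icc (0:ℝ) 1) := by
    apply antitoneOn_of_deriv_nonpos (convex_Icc 0 1) hPcont.continuousOn
      (fun x _ => (hPd x).differentiableAt.differentiableWithinAt)
    intro x hx
    rw [interior_Icc] at hx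
    rw [(hPd x).deriv]
    have hx' : x ∈ Set.Icc (0:ℝ) 1 := Set.Ioo_subset_Icc_self hx
    have h1 := hstep x hx'
    have h2 : H x = ∫ s in Set.Ioc 0 x, z s := hHIoc x hx'.1
    have hexp : 0 < Real.exp (-(K*x)) := Real.exp_pos _
    have h3 : z x - K * H x ≤ 0 := by rw [h2]; linarith
    exact mul_nonpos_of_nonpos_of_nonneg h3 hexp.le
  intro x hx
  have hPle : P x ≤ P 0 := hPmono (Set.left_mem_Icc.mpr zero_le_one) hx hx.1
  have hP0 : P 0 = 0 := by
    show H 0 * Real.exp (-(K*0)) = 0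
    rw [hH0, zero_mul]
  have hHnn : 0 ≤ H x := by
    rw [hHIoc x hx.1]
    exact MeasureTheory.integral_nonneg (fun s => hznn s)
  have hHx0 : H x = 0 := by
    have h2 : H x * Real.exp (-(K*x)) ≤ 0 := by
      have : P x ≤ 0 := by rw [← hP0]; exact hPle
      exact this
    have hexp : 0 < Real.exp (-(K*x)) := Real.exp_pos _
    nlinarith
  have hzx : z x ≤ 0 := by
    have h1 := hstep x hx
    rw [← hHIoc x hx.1] at h1
    rw [hHx0] at h1
    linarith
  have h4 : ‖y x‖ + ‖y' x‖ ≤ 0 := by rw [← hzIcc x hx]; exact hzx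
  have h5 : ‖y x‖ = 0 := le_antisymm (by linarith [norm_nonneg (y' x)]) (norm_nonneg _)
  exact norm_eq_zero.mp h5


/-- Key comparison: a normalized positive solution for `B0 ≤ b2` (not a.e. `b2`) forces
`√b2 · tanh(t0·√b2) > 1`. -/
lemma key_ineq (b1 b2 t0 : ℝ) (hb1 : 0 ≤ b1) (hb2 : 0 < b2) (ht0 : 0 < t0)
    (B0 : ℝ → ℝ)
    (hBae : ∀ᵐ x ∂(volume.restrict (Set.Ioo (0:ℝ) 1)), b1 ≤ B0 x ∧ B0 x ≤ b2)
    (hne2 : ¬ (∀ᵐ x ∂(volume.restrict (Set.Ioo (0:ℝ) 1)), B0 x = b2))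
    (u u' : ℝ → ℝ)
    (hud : ∀ x ∈ Set.Icc (0:ℝ) 1, HasDerivWithinAt u (u' x) (Set.Icc (0:ℝ) 1) x)
    (hLip : ∃ L : ℝ≥0, LipschitzOnWith L u' (Set.Icc (0:ℝ) 1))
    (hode : ∀ᵐ x ∂(volume.restrict (Set.Ioo (0:ℝ) 1)),
      HasDerivAt u' (t0^2 * B0 x * u x) x)
    (hu0 : u 0 = 1) (hu'0 : u' 0 = 0) (hbd : u' 1 = t0 * u 1) :
    1 < Real.sqrt b2 * Real.tanh (t0 * Real.sqrt b2) := by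
  obtain ⟨L, hL⟩ := hLip
  have hucont : ContinuousOn u (Set.Icc 0 1) := fun x hx => (hud x hx).continuousWithinAt
  obtain ⟨hqInt, hFTC⟩ := ftc_lip hL hode
  -- Positivity of u
  have hpos : ∀ x ∈ Set.Icc (0:ℝ) 1, 1/2 < u x := by
    by_contra hcon
    push_neg at hcon
    obtain ⟨x0, hx0, hx0le⟩ := hcon
    set S : Set ℝ := {x ∈ Set.Icc (0:ℝ) 1 | u x ≤ 1/2} with hS_def
    have hSne : S.Nonempty := ⟨x0, hx0, hx0le⟩
    have hSbdd : BddBelow S := ⟨0, fun x hx => hx.1.1⟩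
    have hSclosed : IsClosed S := by
      have : S = Set.Icc (0:ℝ) 1 ∩ u ⁻¹' (Set.Iic (1/2)) := by
        ext x; simp [hS_def, Set.mem_sep_iff, and_comm]
      rw [this]
      exact hucont.preimage_isClosed_of_isClosed isClosed_Icc isClosed_Iic
    set T := sInf S with hT_def
    have hTS : T ∈ S := hSclosed.csInf_mem hSne hSbdd
    have hT01 : T ∈ Set.Icc (0:ℝ) 1 := hTS.1
    have hTu : u T ≤ 1/2 := hTS.2
    have hTpos : 0 < T := by
      rcases lt_or_eq_of_le hT01.1 with h | h
      · exact h
      · exfalso; rw [← h] at hTu; rw [hu0] at hTu; linarith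
    have hlt : ∀ x : ℝ, 0 ≤ x → x < T → 1/2 < u x := by
      intro x hx0' hxT
      by_contra hc
      push_neg at hc
      have : x ∈ S := ⟨⟨hx0', hxT.le.trans hT01.2⟩, hc⟩
      exact absurd (csInf_le hSbdd this) (not_le.mpr hxT)
    -- u' nonneg on [0, T]
    have hu'nonneg : ∀ r ∈ Set.Icc (0:ℝ) T, 0 ≤ u' r := by
      intro r hr
      have hr1 : r ≤ 1 := hr.2.trans hT01.2
      have := hFTC 0 r le_rfl hr.1 hr1
      rw [hu'0, sub_zero] at this
      rw [this]
      apply MeasureTheory.integral_nonneg_of_ae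
      filter_upwards [ae_Ioc_of_ae_Ioo01 le_rfl hr1 hBae,
        ae_restrict_mem measurableSet_Ioc, ae_ne_pt T _] with x hxB hxI hxT
      have hxltT : x < T := lt_of_le_of_ne (hxI.2.trans hr.2) hxT
      have hux : 1/2 < u x := hlt x hxI.1.le hxltT
      have hB0 : 0 ≤ B0 x := hb1.trans hxB.1
      show (0:ℝ) ≤ t0^2 * B0 x * u x
      exact mul_nonneg (mul_nonneg (sq_nonneg t0) hB0) (by linarith)
    -- u monotone on [0, T]
    have hmonoT : MonotoneOn u (Set.Icc (0:ℝ) T) := by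
      apply monotoneOn_of_deriv_nonneg (convex_Icc 0 T)
        (hucont.mono (Set.Icc_subset_Icc le_rfl hT01.2))
      · intro x hx
        rw [interior_Icc] at hx
        have hx01 : x ∈ Set.Ioo (0:ℝ) 1 := ⟨hx.1, lt_of_lt_of_le hx.2 hT01.2⟩
        exact (hasDerivAt_of_Ioo hud hx01).differentiableAt.differentiableWithinAt
      · intro x hx
        rw [interior_Icc] at hx
        have hx01 : x ∈ Set.Ioo (0:ℝ) 1 := ⟨hx.1, lt_of_lt_of_le hx.2 hT01.2⟩
        rw [(hasDerivAt_of_Ioo hud hx01).deriv]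
        exact hu'nonneg x ⟨hx.1.le, hx.2.le⟩
    have := hmonoT (Set.left_mem_Icc.mpr hTpos.le) (Set.right_mem_Icc.mpr hTpos.le) hTpos.le
    rw [hu0] at this
    linarith
  -- the comparison solution v = cosh(a x)
  set a : ℝ := t0 * Real.sqrt b2 with ha_def
  have hsqrt : 0 < Real.sqrt b2 := Real.sqrt_pos.mpr hb2
  have ha : 0 < a := mul_pos ht0 hsqrt
  have ha2 : a^2 = t0^2 * b2 := by
    rw [ha_def, mul_pow, Real.sq_sqrt hb2.le]
  set v : ℝ → ℝ := fun x => Real.cosh (a * x) with hv_def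
  set v' : ℝ → ℝ := fun x => a * Real.sinh (a * x) with hv'_def
  have hvd : ∀ x : ℝ, HasDerivAt v (v' x) x := by
    intro x
    have h1 : HasDerivAt (fun x : ℝ => a * x) a x := by
      simpa using (hasDerivAt_id x).const_mul a
    have h2 : HasDerivAt (fun y : ℝ => Real.cosh (a * y)) (Real.sinh (a * x) * a) x :=
      (Real.hasDerivAt_cosh (a * x)).comp x h1
    have h3 : v' x = Real.sinh (a * x) * a := by rw [hv'_def]; ring
    rw [h3]
    exact h2
  have hv'd : ∀ x : ℝ, HasDerivAt v' (a^2 * v x) x := by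
    intro x
    have h1 : HasDerivAt (fun x : ℝ => a * x) a x := by
      simpa using (hasDerivAt_id x).const_mul a
    have h2 : HasDerivAt (fun y : ℝ => a * Real.sinh (a * y)) (a * (Real.cosh (a * x) * a)) x :=
      ((Real.hasDerivAt_sinh (a * x)).comp x h1).const_mul a
    have h3 : a^2 * v x = a * (Real.cosh (a * x) * a) := by rw [hv_def]; ring
    rw [h3]
    exact h2
  have hvpos : ∀ x : ℝ, 0 < v x := fun x => Real.cosh_pos _
  -- Lipschitz data
  have hulip : ∃ K : ℝ≥0, LipschitzOnWith K u (Set.Icc (0:ℝ) 1) := by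
    obtain ⟨M, hM0, hM⟩ := lipOn_bounded ⟨L, hL⟩
    exact lipOn_of_deriv hud hM
  have hvlip : ∃ K : ℝ≥0, LipschitzOnWith K v (Set.Icc (0:ℝ) 1) := by
    apply lipOn_of_deriv (f' := v') (C := a * Real.sinh a)
      (fun x _ => (hvd x).hasDerivWithinAt)
    intro x hx
    rw [hv'_def, abs_mul, abs_of_pos ha]
    have h1 : |Real.sinh (a * x)| ≤ Real.sinh a := by
      rw [abs_le]
      constructor
      · have : -Real.sinh a = Real.sinh (-a) := (Real.sinh_neg a).symm
        rw [this]
        exact Real.sinh_le_sinh.mpr (by nlinarith [hx.1, hx.2])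
      · exact Real.sinh_le_sinh.mpr (by nlinarith [hx.1, hx.2])
    exact mul_le_mul_of_nonneg_left h1 ha.le
  have hv'lip : ∃ K : ℝ≥0, LipschitzOnWith K v' (Set.Icc (0:ℝ) 1) := by
    apply lipOn_of_deriv (f' := fun x => a^2 * v x) (C := a^2 * Real.cosh a)
      (fun x _ => (hv'd x).hasDerivWithinAt)
    intro x hx
    rw [abs_mul, _root_.abs_of_nonneg (sq_nonneg a), hv_def]
    have h1 : |Real.cosh (a * x)| ≤ Real.cosh a := by
      rw [abs_of_pos (Real.cosh_pos _)]
      apply Real.cosh_le_cosh.mpr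
      rw [_root_.abs_of_nonneg (by nlinarith [hx.1] : (0:ℝ) ≤ a * x), _root_.abs_of_pos ha]
      nlinarith [hx.1, hx.2]
    exact mul_le_mul_of_nonneg_left h1 (sq_nonneg a)
  -- the Wronskian
  set W : ℝ → ℝ := fun x => u' x * v x - u x * v' x with hW_def
  have hWlip : ∃ K : ℝ≥0, LipschitzOnWith K W (Set.Icc (0:ℝ) 1) :=
    lipOn_sub (lipOn_mul ⟨L, hL⟩ hvlip) (lipOn_mul hulip hv'lip)
  obtain ⟨KW, hKW⟩ := hWlip
  set ρ : ℝ → ℝ := fun x => t0^2 * (B0 x - b2) * (u x * v x) with hρ_def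
  have hWae : ∀ᵐ x ∂(volume.restrict (Set.Ioo (0:ℝ) 1)), HasDerivAt W (ρ x) x := by
    filter_upwards [hode, ae_restrict_mem measurableSet_Ioo] with x hx1 hx2
    have hu'x : HasDerivAt u (u' x) x := hasDerivAt_of_Ioo hud hx2
    have h1 : HasDerivAt (fun y => u' y * v y) (t0^2 * B0 x * u x * v x + u' x * v' x) x :=
      hx1.mul (hvd x)
    have h2 : HasDerivAt (fun y => u y * v' y) (u' x * v' x + u x * (a^2 * v x)) x :=
      hu'x.mul (hv'd x)
    have := h1.sub h2
    have heq : t0^2 * B0 x * u x * v x + u' x * v' x - (u' x * v' x + u x * (a^2 * v x))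
        = ρ x := by rw [hρ_def, ha2]; ring
    rw [heq] at this
    exact this
  obtain ⟨hρInt, hWFTC⟩ := ftc_lip hKW hWae
  have hW0 : W 0 = 0 := by
    show u' 0 * v 0 - u 0 * v' 0 = 0
    have hv'0 : v' 0 = 0 := by rw [hv'_def]; simp [Real.sinh_zero]
    rw [hu'0, hv'0]; ring
  have hWform : W 1 = ∫ x in Set.Ioc (0:ℝ) 1, ρ x := by
    have h := hWFTC 0 1 le_rfl zero_le_one le_rfl
    rw [hW0] at h; linarith
  have hρInt' : IntegrableOn ρ (Set.Ioc 0 1) volume := by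
    rw [IntegrableOn, (Measure.restrict_congr_set MeasureTheory.Ioo_ae_eq_Ioc).symm]
    exact hρInt
  have hρ_nonpos : ∀ᵐ x ∂(volume.restrict (Set.Ioc (0:ℝ) 1)), ρ x ≤ 0 := by
    filter_upwards [ae_Ioc_of_ae_Ioo01 le_rfl le_rfl hBae,
      ae_restrict_mem measurableSet_Ioc] with x hxB hxI
    have hux : 0 < u x := by
      have := hpos x ⟨hxI.1.le, hxI.2⟩; linarith
    have hvx := hvpos x
    show t0^2 * (B0 x - b2) * (u x * v x) ≤ 0
    have h1 : t0^2 * (u x * v x) ≥ 0 := mul_nonneg (sq_nonneg t0) (mul_pos hux hvx).le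
    nlinarith [hxB.2]
  have hWle : W 1 ≤ 0 := by
    rw [hWform]
    apply MeasureTheory.integral_nonpos_of_ae
    filter_upwards [hρ_nonpos] with x hx
    exact hx
  have hu1 : 0 < u 1 := by
    have := hpos 1 ⟨zero_le_one, le_refl 1⟩; linarith
  have hWlt : W 1 < 0 := by
    rcases lt_or_eq_of_le hWle with h | h
    · exact h
    exfalso
    have h0nonneg : (0:ℝ→ℝ) ≤ᵐ[volume.restrict (Set.Ioc (0:ℝ) 1)] fun x => -ρ x := by
      filter_upwards [hρ_nonpos] with x hx
      show (0:ℝ) ≤ -ρ x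
      linarith
    have hzero : ∫ x in Set.Ioc (0:ℝ) 1, (-ρ x) = 0 := by
      rw [MeasureTheory.integral_neg]
      rw [← hWform, h, neg_zero]
    have hae0 : (fun x => -ρ x) =ᵐ[volume.restrict (Set.Ioc (0:ℝ) 1)] 0 :=
      (MeasureTheory.integral_eq_zero_iff_of_nonneg_ae h0nonneg hρInt'.neg).mp hzero
    apply hne2
    have hae0' : ∀ᵐ x ∂(volume.restrict (Set.Ioo (0:ℝ) 1)), -ρ x = (0:ℝ→ℝ) x :=
      ae_restrict_of_ae_restrict_of_subset Set.Ioo_subset_Ioc_self hae0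
    filter_upwards [hae0', ae_restrict_mem measurableSet_Ioo] with x hx hxI
    have hux : 0 < u x := by
      have := hpos x ⟨hxI.1.le, hxI.2.le⟩; linarith
    have hvx := hvpos x
    have hρ0 : t0^2 * (B0 x - b2) * (u x * v x) = 0 := by
      have : -ρ x = 0 := hx
      have h2 : ρ x = 0 := by linarith
      exact h2
    have ht02 : t0^2 ≠ 0 := by positivity
    have huv : u x * v x ≠ 0 := (mul_pos hux hvx).ne'
    rcases mul_eq_zero.mp hρ0 with h' | h'
    · rcases mul_eq_zero.mp h' with h'' | h''
      · exact absurd h'' ht02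
      · linarith [sub_eq_zero.mp h'']
    · exact absurd h' huv
  -- conclude
  have hWlt' : u' 1 * v 1 - u 1 * v' 1 < 0 := hWlt
  have hv1 : v 1 = Real.cosh a := by rw [hv_def]; norm_num
  have hv'1 : v' 1 = a * Real.sinh a := by rw [hv'_def]; norm_num
  rw [hbd, hv1, hv'1] at hWlt'
  have hkey : t0 * Real.cosh a < a * Real.sinh a := by nlinarith [hWlt', hu1]
  have hchpos := Real.cosh_pos a
  rw [Real.tanh_eq_sinh_div_cosh, ← mul_div_assoc, lt_div_iff₀ hchpos, one_mul]
  have h3 : a * Real.sinh a = t0 * (Real.sqrt b2 * Real.sinh a) := by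
    rw [ha_def]; ring
  rw [h3] at hkey
  exact lt_of_mul_lt_mul_left hkey ht0.le


set_option maxHeartbeats 1000000 in
/-- The constant structure `b2` has quasi-eigenvalue `i t1` when `√b2 tanh(t1 √b2) = 1`. -/
lemma const_QE (b2 t1 : ℝ) (hb2 : 0 < b2) (ht1pos : 0 < t1)
    (hGt1 : Real.sqrt b2 *
      (Real.sinh (t1 * Real.sqrt b2) / Real.cosh (t1 * Real.sqrt b2)) = 1) :
    QuasiEigen (fun _ : ℝ => ((b2 : ℝ) : ℂ)) (Complex.I * ((t1:ℝ):ℂ)) := by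
  have hsqrt : 0 < Real.sqrt b2 := Real.sqrt_pos.mpr hb2
  set a1 : ℝ := t1 * Real.sqrt b2 with ha1_def
  have ha1 : 0 < a1 := mul_pos ht1pos hsqrt
  have ha1sq : a1^2 = t1^2 * b2 := by
    rw [ha1_def, mul_pow, Real.sq_sqrt hb2.le]
  set Y : ℝ → ℂ := fun x => ((Real.cosh (a1*x) : ℝ) : ℂ) with hY_def
  set Y' : ℝ → ℂ := fun x => ((a1 * Real.sinh (a1*x) : ℝ) : ℂ) with hY'_def
  have hwd : ∀ x : ℝ, HasDerivAt (fun s : ℝ => Real.cosh (a1*s)) (a1 * Real.sinh (a1*x)) x := by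
    intro x
    have h1 : HasDerivAt (fun s : ℝ => a1 * s) a1 x := by
      simpa using (hasDerivAt_id x).const_mul a1
    have h2 := (Real.hasDerivAt_cosh (a1*x)).comp x h1
    have h3 : a1 * Real.sinh (a1*x) = Real.sinh (a1*x) * a1 := mul_comm _ _
    rw [h3]
    exact h2
  have hw'd : ∀ x : ℝ, HasDerivAt (fun s : ℝ => a1 * Real.sinh (a1*s))
      (a1^2 * Real.cosh (a1*x)) x := by
    intro x
    have h1 : HasDerivAt (fun s : ℝ => a1 * s) a1 x := by
      simpa using (hasDerivAt_id x).const_mul a1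
    have h2 : HasDerivAt (fun s : ℝ => a1 * Real.sinh (a1*s))
        (a1 * (Real.cosh (a1*x) * a1)) x :=
      ((Real.hasDerivAt_sinh (a1*x)).comp x h1).const_mul a1
    have h3 : a1^2 * Real.cosh (a1*x) = a1 * (Real.cosh (a1*x) * a1) := by ring
    rw [h3]
    exact h2
  have hYd : ∀ x : ℝ, HasDerivAt Y (Y' x) x := fun x => (hwd x).ofReal_comp
  have hY'd : ∀ x : ℝ, HasDerivAt Y' (((a1^2 * Real.cosh (a1*x) : ℝ)):ℂ) x :=
    fun x => (hw'd x).ofReal_comp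
  refine ⟨?_, Y, Y', ⟨?_, ?_, ?_⟩, ?_, ?_, ?_⟩
  · apply mul_ne_zero Complex.I_ne_zero
    simpa using ht1pos.ne'
  · intro x hx
    exact (hYd x).hasDerivWithinAt
  · have hbnd : ∀ x ∈ Set.Icc (0:ℝ) 1, |a1^2 * Real.cosh (a1*x)| ≤ a1^2 * Real.cosh a1 := by
      intro x hx
      rw [abs_mul, _root_.abs_of_nonneg (sq_nonneg a1)]
      have h1 : |Real.cosh (a1*x)| ≤ Real.cosh a1 := by
        rw [_root_.abs_of_pos (Real.cosh_pos _)]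
        apply Real.cosh_le_cosh.mpr
        rw [_root_.abs_of_nonneg (by nlinarith [hx.1] : (0:ℝ) ≤ a1 * x),
          _root_.abs_of_pos ha1]
        nlinarith [hx.1, hx.2]
      exact mul_le_mul_of_nonneg_left h1 (sq_nonneg a1)
    obtain ⟨K, hK⟩ := lipOn_of_deriv (f := fun x => a1 * Real.sinh (a1*x))
      (f' := fun x => a1^2 * Real.cosh (a1*x)) (C := a1^2 * Real.cosh a1)
      (fun x _ => (hw'd x).hasDerivWithinAt) hbnd
    refine ⟨1 * K, ?_⟩
    exact Complex.isometry_ofReal.lipschitz.comp_lipschitzOnWith hK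
  · apply Filter.Eventually.of_forall
    intro x
    have he : -(Complex.I * ((t1:ℝ):ℂ))^2 * ((b2:ℝ):ℂ) * Y x
        = ((a1^2 * Real.cosh (a1*x) : ℝ) : ℂ) := by
      rw [hY_def]
      simp only
      rw [ha1sq]
      have hI : (Complex.I * ((t1:ℝ):ℂ))^2 = -(((t1^2:ℝ)):ℂ) := by
        rw [mul_pow, Complex.I_sq]
        push_cast
        ring
      rw [hI]
      push_cast
      ring
    rw [he]
    exact hY'd x
  · refine ⟨0, ⟨le_rfl, zero_le_one⟩, ?_⟩
    rw [hY_def]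
    simp only
    rw [mul_zero, Real.cosh_zero]
    simp
  · rw [hY'_def]
    simp only
    rw [mul_zero, Real.sinh_zero, mul_zero]
    simp
  · have hr : t1 * Real.cosh a1 = a1 * Real.sinh a1 := by
      have hc : Real.cosh a1 ≠ 0 := (Real.cosh_pos a1).ne'
      have h2 : Real.sqrt b2 * Real.sinh a1 = Real.cosh a1 := by
        field_simp [hc] at hGt1
        linarith [hGt1]
      calc t1 * Real.cosh a1 = t1 * (Real.sqrt b2 * Real.sinh a1) := by rw [h2]
        _ = a1 * Real.sinh a1 := by rw [ha1_def]; ring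
    show Complex.I * ((t1:ℝ):ℂ) * Y 1 = Complex.I * Y' 1
    rw [hY_def, hY'_def]
    simp only [mul_one]
    rw [mul_assoc, ← Complex.ofReal_mul]
    congr 1
    exact Complex.ofReal_inj.mpr hr


set_option maxHeartbeats 1000000 in
/-- Non-extreme structures are not optimal on the imaginary axis.
If `B0 ∈ Ad` has a quasi-eigenvalue `κ0 ∈ i·ℝ₊` and `B0` is not a.e. equal to the
constant `b1` nor to the constant `b2`, then `κ0 − iβ1 ∈ K(Ad)` for some `β1 > 0`. -/
theorem statement19 (b1 b2 : ℝ) (hb1 : 0 ≤ b1) (hb12 : b1 ≤ b2) (hb2 : 0 < b2)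
    (B0 : ℝ → ℝ) (hB0 : InAd b1 b2 B0)
    (κ0 : ℂ) (hQE : QuasiEigen (fun x => ((B0 x : ℝ) : ℂ)) κ0)
    (hre : κ0.re = 0) (him : 0 < κ0.im)
    (hne1 : ¬ (∀ᵐ x ∂mu01, B0 x = b1))
    (hne2 : ¬ (∀ᵐ x ∂mu01, B0 x = b2)) :
    ∃ β1 > (0:ℝ), ∃ B1 : ℝ → ℝ, InAd b1 b2 B1 ∧
      QuasiEigen (fun x => ((B1 x : ℝ) : ℂ)) (κ0 - Complex.I * (β1 : ℂ)) := by
  have hmu : mu01 = volume.restrict (Set.Ioo 0 1) := rfl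
  set t0 : ℝ := κ0.im with ht0_def
  have ht0 : 0 < t0 := him
  have hκ : κ0 = Complex.I * (t0 : ℂ) := by
    apply Complex.ext
    · simp [hre]
    · simp [ht0_def]
  have hκsq : -(κ0^2) = ((t0^2 : ℝ) : ℂ) := by
    rw [hκ]
    push_cast
    ring_nf
    rw [Complex.I_sq]
    ring
  obtain ⟨hκne, y, y', ⟨hyd, hyLip, hyode⟩, ⟨xw, hxw, hyxw⟩, hy'0, hbc⟩ := hQE
  -- rewrite the ODE
  have hyode' : ∀ᵐ x ∂(volume.restrict (Set.Ioo (0:ℝ) 1)),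
      HasDerivAt y' (((t0^2 * B0 x : ℝ) : ℂ) * y x) x := by
    rw [← hmu]
    filter_upwards [hyode] with x hx
    have he : -(κ0^2) * ((B0 x : ℝ) : ℂ) * y x = ((t0^2 * B0 x : ℝ) : ℂ) * y x := by
      rw [hκsq]; push_cast; ring
    rw [← he]
    exact hx
  -- boundary condition
  have hy'1 : y' 1 = ((t0 : ℝ) : ℂ) * y 1 := by
    rw [hκ] at hbc
    have h2 : Complex.I * (((t0:ℝ):ℂ) * y 1) = Complex.I * y' 1 := by
      rw [← hbc]; ring
    exact (mul_left_cancel₀ Complex.I_ne_zero h2).symm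
  have hBae : ∀ᵐ x ∂(volume.restrict (Set.Ioo (0:ℝ) 1)), b1 ≤ B0 x ∧ B0 x ≤ b2 := by
    rw [← hmu]; exact hB0.2
  -- y 0 ≠ 0
  have hy0ne : y 0 ≠ 0 := by
    intro hy0
    have hBabs : ∀ᵐ x ∂(volume.restrict (Set.Ioo (0:ℝ) 1)), |B0 x| ≤ b2 := by
      filter_upwards [hBae] with x hx
      rw [abs_le]
      exact ⟨by linarith [hx.1], hx.2⟩
    exact hyxw (sol_zero t0 b2 hb2.le B0 hBabs y y' hyd hyLip hyode' hy0 hy'0 xw hxw)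
  -- normalized real solution
  set c : ℂ := (y 0)⁻¹ with hc_def
  set T : ℂ →L[ℝ] ℝ := Complex.reCLM.comp (c • ContinuousLinearMap.id ℝ ℂ) with hT_def
  have hTval : ∀ z : ℂ, T z = (c * z).re := by
    intro z
    simp [hT_def, smul_eq_mul]
  set u : ℝ → ℝ := fun x => (c * y x).re with hu_def
  set u' : ℝ → ℝ := fun x => (c * y' x).re with hu'_def
  have hud : ∀ x ∈ Set.Icc (0:ℝ) 1, HasDerivWithinAt u (u' x) (Set.Icc (0:ℝ) 1) x := by
    intro x hx
    have h0 := T.hasFDerivAt.comp_hasDerivWithinAt x (hyd x hx)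
    have h2 : ⇑T ∘ y = u := funext (fun s => hTval (y s))
    have h3 : T (y' x) = u' x := hTval (y' x)
    rw [h2, h3] at h0
    exact h0
  have hulip : ∃ L : ℝ≥0, LipschitzOnWith L u' (Set.Icc (0:ℝ) 1) := by
    obtain ⟨Ly, hLy⟩ := hyLip
    refine ⟨‖T‖₊ * Ly, ?_⟩
    have h0 := T.lipschitz.comp_lipschitzOnWith hLy
    have h2 : ⇑T ∘ y' = u' := funext (fun s => hTval (y' s))
    rw [h2] at h0
    exact h0
  have hTr : ∀ (r : ℝ) (z : ℂ), T (((r:ℝ):ℂ) * z) = r * T z := by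
    intro r z
    rw [hTval, hTval]
    have : c * ((r:ℂ) * z) = (r:ℂ) * (c * z) := by ring
    rw [this, Complex.re_ofReal_mul]
  have huode : ∀ᵐ x ∂(volume.restrict (Set.Ioo (0:ℝ) 1)),
      HasDerivAt u' (t0^2 * B0 x * u x) x := by
    filter_upwards [hyode'] with x hx
    have h0 := T.hasFDerivAt.comp_hasDerivAt x hx
    have h2 : ⇑T ∘ y' = u' := funext (fun s => hTval (y' s))
    have h3 : T (((t0^2 * B0 x : ℝ):ℂ) * y x) = t0^2 * B0 x * u x := by
      rw [hTr, hTval]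
    rw [h2, h3] at h0
    exact h0
  have hu0 : u 0 = 1 := by
    show (c * y 0).re = 1
    rw [hc_def, inv_mul_cancel₀ hy0ne]
    simp
  have hu'0 : u' 0 = 0 := by
    show (c * y' 0).re = 0
    rw [hy'0, mul_zero]
    simp
  have hubd : u' 1 = t0 * u 1 := by
    show (c * y' 1).re = t0 * (c * y 1).re
    rw [hy'1]
    have h4 : c * (((t0:ℝ):ℂ) * y 1) = ((t0:ℝ):ℂ) * (c * y 1) := by ring
    rw [h4, Complex.re_ofReal_mul]
  have hne2' : ¬ (∀ᵐ x ∂(volume.restrict (Set.Ioo (0:ℝ) 1)), B0 x = b2) := by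
    rw [← hmu]; exact hne2
  have htanh := key_ineq b1 b2 t0 hb1 hb2 ht0 B0 hBae hne2' u u' hud hulip huode
    hu0 hu'0 hubd
  -- IVT
  set G : ℝ → ℝ := fun t =>
    Real.sqrt b2 * (Real.sinh (t * Real.sqrt b2) / Real.cosh (t * Real.sqrt b2)) with hG_def
  have hGcont : Continuous G := by
    apply continuous_const.mul
    apply Continuous.div
    · exact Real.continuous_sinh.comp (continuous_id.mul continuous_const)
    · exact Real.continuous_cosh.comp (continuous_id.mul continuous_const)
    · intro x; exact (Real.cosh_pos _).ne'
  have hG0 : G 0 = 0 := by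
    rw [hG_def]; simp [Real.sinh_zero]
  have hGt0 : 1 < G t0 := by
    rw [hG_def]
    simp only
    rw [← Real.tanh_eq_sinh_div_cosh]
    exact htanh
  obtain ⟨t1, ht1mem, hGt1⟩ : ∃ t1 ∈ Set.Ioo (0:ℝ) t0, G t1 = 1 := by
    have hsub := intermediate_value_Ioo (le_of_lt ht0) hGcont.continuousOn
    have h1 : (1:ℝ) ∈ Set.Ioo (G 0) (G t0) := by
      rw [hG0]; exact ⟨one_pos, hGt0⟩
    obtain ⟨t1, ht1, hGt1⟩ := hsub h1
    exact ⟨t1, ht1, hGt1⟩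
  refine ⟨t0 - t1, by linarith [ht1mem.2], fun _ => b2, ?_, ?_⟩
  · exact ⟨aestronglyMeasurable_const, Filter.Eventually.of_forall (fun x => ⟨hb12, le_rfl⟩)⟩
  · have hκ1 : κ0 - Complex.I * ((t0 - t1 : ℝ) : ℂ) = Complex.I * ((t1:ℝ):ℂ) := by
      rw [hκ]; push_cast; ring
    rw [hκ1]
    have hGt1' : Real.sqrt b2 *
        (Real.sinh (t1 * Real.sqrt b2) / Real.cosh (t1 * Real.sqrt b2)) = 1 := by
      rw [hG_def] at hGt1
      exact hGt1
    exact const_QE b2 t1 hb2 ht1mem.1 hGt1'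

end
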